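/- arXiv:2506.07382 — 2 statements merged into one kernel-verified Lean document; each statement's English description precedes it below -/
import Mathlib

section
/- The Hausdorff content H^α_μ on a self-similar set K is strongly subadditive: for any sets E_1, E_2 ⊂ K, H^α_μ(E_1 ∪ E_2) + H^α_μ(E_1 ∩ E_2) ≤ H^α_μ(E_1) + H^α_μ(E_2). -/
open MeasureTheory Set Filter
open scoped ENNReal NNReal Topology

noncomputable section

abbrev Pt (d : ℕ) := EuclideanSpace ℝ (Fin d)

/-- An iterated function system of contractive similitudes on ℝ^d with attractor `K`
satisfying the strong separation condition. -/
structure IFS (d m : ℕ) where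
  S : Fin m → Pt d → Pt d
  r : Fin m → ℝ
  r_pos : ∀ i, 0 < r i
  r_lt_one : ∀ i, r i < 1
  similitude : ∀ i x y, dist (S i x) (S i y) = r i * dist x y
  K : Set (Pt d)
  K_nonempty : K.Nonempty
  K_compact : IsCompact K
  K_invariant : K = ⋃ i, S i '' K
  ssc : Pairwise fun i j => Disjoint (S i '' K) (S j '' K)

namespace IFS

variable {d m : ℕ}

/-- The composition `S_{i₁} ∘ ⋯ ∘ S_{iₙ}` for the word `w = i₁ ⋯ iₙ`. -/
def cylMap (Φ : IFS d m) (w : List (Fin m)) : Pt d → Pt d :=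
  w.foldr (fun i g => Φ.S i ∘ g) id

/-- The basic cube (cylinder set) `K_w = S_{i₁} ∘ ⋯ ∘ S_{iₙ}(K)`. -/
def cyl (Φ : IFS d m) (w : List (Fin m)) : Set (Pt d) :=
  Φ.cylMap w '' Φ.K

/-- `μ` is the self-similar probability measure associated with the probability
vector `p` (with all `p i > 0`), i.e. `μ = ∑ i, p i • μ ∘ S i ⁻¹`, supported on `K`. -/
def SelfSimilar (Φ : IFS d m) (p : Fin m → ℝ≥0∞) (μ : Measure (Pt d)) : Prop :=
  (∑ i, p i = 1) ∧ (∀ i, 0 < p i) ∧ IsProbabilityMeasure μ ∧ μ Φ.K = 1 ∧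
    μ = ∑ i, p i • μ.map (Φ.S i)

/-- The α-dimensional Hausdorff content on `K` associated with `μ`, defined via
coverings by countable families of basic cubes; `s` is the Hausdorff dimension of `K`. -/
def hContent (Φ : IFS d m) (μ : Measure (Pt d)) (s α : ℝ) (E : Set (Pt d)) : ℝ≥0∞ :=
  ⨅ (C : Set (List (Fin m))) (_ : C.Countable) (_ : E ⊆ ⋃ w ∈ C, Φ.cyl w),
    ∑' w : C, μ (Φ.cyl w.1) ^ (α / s)

variable (Φ : IFS d m)

lemma S_inj (i : Fin m) : Function.Injective (Φ.S i) := by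
  intro x y h
  have := Φ.similitude i x y
  rw [h, dist_self] at this
  have := (mul_eq_zero.mp this.symm).resolve_left (ne_of_gt (Φ.r_pos i))
  exact dist_eq_zero.mp this

lemma cyl_cons (i : Fin m) (w : List (Fin m)) : Φ.cyl (i :: w) = Φ.S i '' Φ.cyl w := by
  show (Φ.S i ∘ Φ.cylMap w) '' Φ.K = Φ.S i '' (Φ.cylMap w '' Φ.K)
  exact Set.image_comp _ _ _

lemma cyl_subset_K (w : List (Fin m)) : Φ.cyl w ⊆ Φ.K := by
  induction w with
  | nil => simp [cyl, cylMap]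
  | cons i w ih =>
    rw [cyl_cons]
    refine (Set.image_mono ih).trans ?_
    rw [Φ.K_invariant]
    exact Set.subset_iUnion_of_subset i (by rw [← Φ.K_invariant])

lemma cylMap_append (v u : List (Fin m)) :
    Φ.cylMap (v ++ u) = Φ.cylMap v ∘ Φ.cylMap u := by
  induction v with
  | nil => rfl
  | cons i v ih =>
    show Φ.S i ∘ Φ.cylMap (v ++ u) = (Φ.S i ∘ Φ.cylMap v) ∘ Φ.cylMap u
    rw [ih]; rfl

lemma cyl_subset_of_prefix {v w : List (Fin m)} (h : v <+: w) : Φ.cyl w ⊆ Φ.cyl v := by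
  obtain ⟨u, rfl⟩ := h
  rw [cyl, cylMap_append, Set.image_comp]
  exact Set.image_mono (Φ.cyl_subset_K u)

lemma prefix_of_cyl_inter {w v : List (Fin m)} (h : (Φ.cyl w ∩ Φ.cyl v).Nonempty) :
    v <+: w ∨ w <+: v := by
  induction w generalizing v with
  | nil => exact Or.inr List.nil_prefix
  | cons i w ih =>
    cases v with
    | nil => exact Or.inl List.nil_prefix
    | cons j v =>
      rcases eq_or_ne i j with rfl | hij
      · rw [cyl_cons, cyl_cons, ← Set.image_inter (Φ.S_inj i)] at h
        rcases (Set.image_nonempty.mp h) |> ih with h' | h'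
        · exact Or.inl (List.cons_prefix_cons.mpr ⟨rfl, h'⟩)
        · exact Or.inr (List.cons_prefix_cons.mpr ⟨rfl, h'⟩)
      · exfalso
        obtain ⟨x, hx1, hx2⟩ := h
        have h1 : x ∈ Φ.S i '' Φ.K := by
          rw [cyl_cons] at hx1; exact Set.image_mono (Φ.cyl_subset_K w) hx1
        have h2 : x ∈ Φ.S j '' Φ.K := by
          rw [cyl_cons] at hx2; exact Set.image_mono (Φ.cyl_subset_K v) hx2
        exact Set.disjoint_left.mp (Φ.ssc hij) h1 h2

/-- The dyadic-type Hardy–Littlewood maximal operator over basic cubes containing `x`. -/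
def maxOp (Φ : IFS d m) (μ : Measure (Pt d)) (f : Pt d → ℝ) (x : Pt d) : ℝ≥0∞ :=
  ⨆ (w : List (Fin m)) (_ : x ∈ Φ.cyl w),
    (μ (Φ.cyl w))⁻¹ * ∫⁻ y in Φ.cyl w, ENNReal.ofReal |f y| ∂μ

end IFS

/-- The Choquet integral of `g` over `E` with respect to the monotone set function `ν`. -/
def choquetInt {X : Type*} (ν : Set X → ℝ≥0∞) (E : Set X) (g : X → ℝ≥0∞) : ℝ≥0∞ :=
  ∫⁻ t in Set.Ioi (0 : ℝ), ν {x ∈ E | ENNReal.ofReal t < g x}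

/-- `log⁺ t = max (0, log t)`. -/
def posLog (t : ℝ) : ℝ := max 0 (Real.log t)

/-- Strong subadditivity of the Hausdorff content. -/
theorem hContent_strongly_subadditive (d m : ℕ) (Φ : IFS d m) (p : Fin m → ℝ≥0∞)
    (μ : Measure (Pt d)) (hμ : Φ.SelfSimilar p μ)
    (s : ℝ) (hs : 0 < s) (hdim : ∑ i, Φ.r i ^ s = 1)
    (α : ℝ) (hα : 0 < α) (hαs : α ≤ s)
    (E₁ E₂ : Set (Pt d)) (h₁ : E₁ ⊆ Φ.K) (h₂ : E₂ ⊆ Φ.K) :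
    Φ.hContent μ s α (E₁ ∪ E₂) + Φ.hContent μ s α (E₁ ∩ E₂) ≤
      Φ.hContent μ s α E₁ + Φ.hContent μ s α E₂ := by
  classical
  set f : List (Fin m) → ℝ≥0∞ := fun w => μ (Φ.cyl w) ^ (α / s) with hfdef
  have hle : ∀ (E : Set (Pt d)) (C : Set (List (Fin m))), C.Countable →
      E ⊆ (⋃ w ∈ C, Φ.cyl w) → Φ.hContent μ s α E ≤ ∑' w : C, f w.1 := by
    intro E C hc hcov
    exact iInf_le_of_le C (iInf_le_of_le hc (iInf_le _ hcov))
  have key : ∀ C₁ : Set (List (Fin m)), C₁.Countable → E₁ ⊆ (⋃ w ∈ C₁, Φ.cyl w) →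
      ∀ C₂ : Set (List (Fin m)), C₂.Countable → E₂ ⊆ (⋃ w ∈ C₂, Φ.cyl w) →
      Φ.hContent μ s α (E₁ ∪ E₂) + Φ.hContent μ s α (E₁ ∩ E₂) ≤
        (∑' w : C₁, f w.1) + ∑' w : C₂, f w.1 := by
    intro C₁ hc₁ hcov₁ C₂ hc₂ hcov₂
    set A : Set (List (Fin m)) := {w | w ∈ C₁ ∧ ∃ v ∈ C₂, v <+: w} with hAdef
    set B : Set (List (Fin m)) := {v | v ∈ C₂ ∧ ∃ w ∈ C₁, w <+: v ∧ w ≠ v} with hBdef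
    have hAsub : A ⊆ C₁ := fun x hx => hx.1
    have hBsub : B ⊆ C₂ := fun x hx => hx.1
    -- cover of the intersection
    have hcovI : E₁ ∩ E₂ ⊆ ⋃ w ∈ A ∪ B, Φ.cyl w := by
      rintro x ⟨hx1, hx2⟩
      obtain ⟨w, hw, hxw⟩ : ∃ w ∈ C₁, x ∈ Φ.cyl w := by
        simpa using hcov₁ hx1
      obtain ⟨v, hv, hxv⟩ : ∃ v ∈ C₂, x ∈ Φ.cyl v := by
        simpa using hcov₂ hx2
      rcases Φ.prefix_of_cyl_inter ⟨x, hxw, hxv⟩ with h | h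
      · exact Set.mem_biUnion (Or.inl ⟨hw, v, hv, h⟩) hxw
      · rcases eq_or_ne w v with rfl | hne
        · exact Set.mem_biUnion (Or.inl ⟨hw, w, hv, List.prefix_refl w⟩) hxw
        · exact Set.mem_biUnion (Or.inr ⟨hv, w, hw, h, hne⟩) hxv
    -- cover of the union
    have hcovU : E₁ ∪ E₂ ⊆ ⋃ w ∈ (C₁ \ A) ∪ (C₂ \ B), Φ.cyl w := by
      intro x hx
      set T : Set (List (Fin m)) := {u | u ∈ C₁ ∪ C₂ ∧ x ∈ Φ.cyl u} with hTdef
      have hTne : T.Nonempty := by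
        rcases hx with hx | hx
        · obtain ⟨w, hw, hxw⟩ : ∃ w ∈ C₁, x ∈ Φ.cyl w := by simpa using hcov₁ hx
          exact ⟨w, Or.inl hw, hxw⟩
        · obtain ⟨w, hw, hxw⟩ : ∃ w ∈ C₂, x ∈ Φ.cyl w := by simpa using hcov₂ hx
          exact ⟨w, Or.inr hw, hxw⟩
      obtain ⟨u, huT, hmin⟩ : ∃ u ∈ T, ∀ v ∈ T, u.length ≤ v.length := by
        have hne : (List.length '' T).Nonempty := hTne.image _
        obtain ⟨u, hu, hlen⟩ := Nat.sInf_mem hne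
        exact ⟨u, hu, fun v hv => hlen ▸ Nat.sInf_le ⟨v, hv, rfl⟩⟩
      obtain ⟨huC, hxu⟩ := huT
      have hnotB : u ∉ B := by
        rintro ⟨_, w, hwC, hpre, hwne⟩
        have hxw : x ∈ Φ.cyl w := Φ.cyl_subset_of_prefix hpre hxu
        have h1 : u.length ≤ w.length := hmin w ⟨Or.inl hwC, hxw⟩
        exact hwne (hpre.eq_of_length_le h1)
      rcases huC with huC | huC
      · by_cases hu : u ∈ A
        · obtain ⟨_, v, hvC, hpre⟩ := hu
          have hxv : x ∈ Φ.cyl v := Φ.cyl_subset_of_prefix hpre hxu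
          have hlen : u.length ≤ v.length := hmin v ⟨Or.inr hvC, hxv⟩
          have hvu : v = u := hpre.eq_of_length_le hlen
          subst hvu
          exact Set.mem_biUnion (Or.inr ⟨hvC, hnotB⟩) hxu
        · exact Set.mem_biUnion (Or.inl ⟨huC, hu⟩) hxu
      · exact Set.mem_biUnion (Or.inr ⟨huC, hnotB⟩) hxu
    have cA : A.Countable := hc₁.mono hAsub
    have cB : B.Countable := hc₂.mono hBsub
    calc Φ.hContent μ s α (E₁ ∪ E₂) + Φ.hContent μ s α (E₁ ∩ E₂)
        ≤ (∑' w : ↑((C₁ \ A) ∪ (C₂ \ B)), f w.1) + ∑' w : ↑(A ∪ B), f w.1 :=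
          add_le_add (hle _ _ (((hc₁.mono Set.diff_subset).union
            (hc₂.mono Set.diff_subset))) hcovU) (hle _ _ (cA.union cB) hcovI)
      _ ≤ ((∑' w : ↑(C₁ \ A), f w.1) + ∑' w : ↑(C₂ \ B), f w.1)
            + ((∑' w : ↑A, f w.1) + ∑' w : ↑B, f w.1) :=
          add_le_add (ENNReal.tsum_union_le _ _ _) (ENNReal.tsum_union_le _ _ _)
      _ = ((∑' w : ↑(C₁ \ A), f w.1) + ∑' w : ↑A, f w.1)
            + ((∑' w : ↑(C₂ \ B), f w.1) + ∑' w : ↑B, f w.1) := by ring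
      _ = (∑' w : C₁, f w.1) + ∑' w : C₂, f w.1 := by
          rw [← Summable.tsum_union_disjoint (Set.disjoint_sdiff_left) ENNReal.summable ENNReal.summable,
            ← Summable.tsum_union_disjoint (Set.disjoint_sdiff_left) ENNReal.summable ENNReal.summable,
            Set.diff_union_of_subset hAsub, Set.diff_union_of_subset hBsub]
  -- conclude using ℝ≥0∞ truncated subtraction
  have step1 : ∀ C₂ : Set (List (Fin m)), C₂.Countable → E₂ ⊆ (⋃ w ∈ C₂, Φ.cyl w) →
      (Φ.hContent μ s α (E₁ ∪ E₂) + Φ.hContent μ s α (E₁ ∩ E₂)) - (∑' w : C₂, f w.1)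
        ≤ Φ.hContent μ s α E₁ := by
    intro C₂ hc₂ hcov₂
    refine le_iInf fun C₁ => le_iInf fun hc₁ => le_iInf fun hcov₁ => ?_
    exact tsub_le_iff_right.mpr (key C₁ hc₁ hcov₁ C₂ hc₂ hcov₂)
  have step2 : (Φ.hContent μ s α (E₁ ∪ E₂) + Φ.hContent μ s α (E₁ ∩ E₂))
      - Φ.hContent μ s α E₁ ≤ Φ.hContent μ s α E₂ := by
    refine le_iInf fun C₂ => le_iInf fun hc₂ => le_iInf fun hcov₂ => ?_
    exact tsub_le_iff_left.mpr (tsub_le_iff_right.mp (step1 C₂ hc₂ hcov₂))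
  exact tsub_le_iff_left.mp step2
end
end

section
/- If a monotone set function ν on subsets of a set X is strongly subadditive (ν(A∪B)+ν(A∩B) ≤ ν(A)+ν(B)) and continuous from below along increasing sequences, then the associated Choquet integral is subadditive: ∫ (f+g) dν ≤ ∫ f dν + ∫ g dν for all nonnegative functions f, g. -/
open MeasureTheory Set Filter
open scoped ENNReal NNReal Topology

noncomputable section

section ChoquetAux
variable {X : Type*}

private lemma choquet_anti (ν : Set X → ℝ≥0∞) (hmono : ∀ A B : Set X, A ⊆ B → ν A ≤ ν B)
    (B : Set X) (h : X → ℝ≥0∞) :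
    Antitone fun t : ℝ => ν (B ∩ {x | ENNReal.ofReal t < h x}) := fun _ _ hst =>
  hmono _ _ (inter_subset_inter_right _ fun _ hx =>
    lt_of_le_of_lt (ENNReal.ofReal_le_ofReal hst) hx)

private lemma choquet_anti' (ν : Set X → ℝ≥0∞) (hmono : ∀ A B : Set X, A ⊆ B → ν A ≤ ν B)
    (h : X → ℝ≥0∞) :
    Antitone fun t : ℝ => ν {x | ENNReal.ofReal t < h x} := fun _ _ hst =>
  hmono _ _ fun _ hx => lt_of_le_of_lt (ENNReal.ofReal_le_ofReal hst) hx

private lemma choquet_shift (F : ℝ → ℝ≥0∞) (c : ℝ) :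
    ∫⁻ t in Set.Ioi c, F (t - c) = ∫⁻ t in Set.Ioi (0:ℝ), F t := by
  rw [← lintegral_indicator measurableSet_Ioi _, ← lintegral_indicator measurableSet_Ioi _,
    ← lintegral_add_right_eq_self (fun t => (Set.Ioi c).indicator (fun u => F (u - c)) t) c]
  congr 1
  funext t
  by_cases ht : 0 < t
  · rw [Set.indicator_of_mem (by simpa using ht), Set.indicator_of_mem (Set.mem_Ioi.mpr ht),
      add_sub_cancel_right]
  · rw [Set.indicator_of_notMem (by simpa using ht), Set.indicator_of_notMem (by simpa using ht)]

private lemma choquet_key (ν : Set X → ℝ≥0∞)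
    (hmono : ∀ A B : Set X, A ⊆ B → ν A ≤ ν B)
    (hssub : ∀ A B : Set X, ν (A ∪ B) + ν (A ∩ B) ≤ ν A + ν B)
    (f : X → ℝ≥0∞) (B : Set X) (c : ℝ) (hc : 0 < c) :
    (∫⁻ t in Set.Ioi (0:ℝ),
        ν {x | ENNReal.ofReal t < f x + B.indicator (fun _ => ENNReal.ofReal c) x})
      ≤ (∫⁻ t in Set.Ioi (0:ℝ), ν {x | ENNReal.ofReal t < f x}) + ENNReal.ofReal c * ν B := by
  set G : ℝ → Set X := fun t => {x | ENNReal.ofReal t < f x} with hG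
  set H : ℝ → Set X := fun t => {x | ENNReal.ofReal t < f x + ENNReal.ofReal c} with hH
  have hsub : ∀ t : ℝ, G t ⊆ H t := by
    intro t x hx
    simp only [hG, hH, mem_setOf_eq] at hx ⊢
    exact lt_of_lt_of_le hx le_self_add
  have hE : ∀ t : ℝ, {x | ENNReal.ofReal t < f x + B.indicator (fun _ => ENNReal.ofReal c) x}
      = G t ∪ (B ∩ H t) := by
    intro t
    ext x
    by_cases hx : x ∈ B
    · simp only [mem_setOf_eq, mem_union, mem_inter_iff, hx, true_and,
        Set.indicator_of_mem hx, hG, hH]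
      exact (or_iff_right_of_imp fun h => lt_of_lt_of_le h le_self_add).symm
    · simp [hx, Set.indicator_of_notMem, hG, hH]
  have hptwise : ∀ t : ℝ, ν (G t ∪ (B ∩ H t)) + ν (B ∩ G t) ≤ ν (G t) + ν (B ∩ H t) := by
    intro t
    have h2 : G t ∩ (B ∩ H t) = B ∩ G t := by
      ext x
      constructor
      · rintro ⟨h1, h2, _⟩; exact ⟨h2, h1⟩
      · rintro ⟨h1, h2⟩; exact ⟨h2, h1, hsub t h2⟩
    rw [← h2]
    exact hssub _ _
  have mE : Measurable fun t : ℝ =>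
      ν {x | ENNReal.ofReal t < f x + B.indicator (fun _ => ENNReal.ofReal c) x} :=
    (choquet_anti' ν hmono _).measurable
  have mG : Measurable fun t : ℝ => ν (G t) := (choquet_anti' ν hmono f).measurable
  have main : (∫⁻ t in Set.Ioi (0:ℝ),
        ν {x | ENNReal.ofReal t < f x + B.indicator (fun _ => ENNReal.ofReal c) x})
        + (∫⁻ t in Set.Ioi (0:ℝ), ν (B ∩ G t))
      ≤ (∫⁻ t in Set.Ioi (0:ℝ), ν (G t)) + (∫⁻ t in Set.Ioi (0:ℝ), ν (B ∩ H t)) := by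
    rw [← lintegral_add_left mE, ← lintegral_add_left mG]
    refine lintegral_mono fun t => ?_
    rw [hE t]
    exact hptwise t
  have hBH : (∫⁻ t in Set.Ioi (0:ℝ), ν (B ∩ H t))
      ≤ ENNReal.ofReal c * ν B + ∫⁻ t in Set.Ioi (0:ℝ), ν (B ∩ G t) := by
    have hsplit : (∫⁻ t in Set.Ioi (0:ℝ), ν (B ∩ H t))
        = (∫⁻ t in Set.Ioc (0:ℝ) c, ν (B ∩ H t)) + ∫⁻ t in Set.Ioi c, ν (B ∩ H t) := by
      rw [← Ioc_union_Ioi_eq_Ioi hc.le,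
        lintegral_union measurableSet_Ioi (Set.Ioc_disjoint_Ioi le_rfl)]
    have p1 : (∫⁻ t in Set.Ioc (0:ℝ) c, ν (B ∩ H t)) ≤ ENNReal.ofReal c * ν B := by
      calc (∫⁻ t in Set.Ioc (0:ℝ) c, ν (B ∩ H t))
          ≤ ∫⁻ _ in Set.Ioc (0:ℝ) c, ν B := lintegral_mono fun t => hmono _ _ inter_subset_left
        _ = ν B * volume (Set.Ioc (0:ℝ) c) := setLIntegral_const _ _
        _ = ENNReal.ofReal c * ν B := by rw [Real.volume_Ioc, sub_zero, mul_comm]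
    have p2 : (∫⁻ t in Set.Ioi c, ν (B ∩ H t)) = ∫⁻ t in Set.Ioi (0:ℝ), ν (B ∩ G t) := by
      have heq : ∀ t ∈ Set.Ioi c, ν (B ∩ H t) = ν (B ∩ G (t - c)) := by
        intro t ht
        have hHt : H t = G (t - c) := by
          ext x
          simp only [hH, hG, mem_setOf_eq]
          rw [show ENNReal.ofReal t = ENNReal.ofReal (t - c) + ENNReal.ofReal c by
            rw [← ENNReal.ofReal_add (by linarith [Set.mem_Ioi.mp ht]) hc.le, sub_add_cancel]]
          exact ENNReal.add_lt_add_iff_right ENNReal.ofReal_ne_top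
        rw [hHt]
      rw [setLIntegral_congr_fun measurableSet_Ioi heq]
      exact choquet_shift (fun s => ν (B ∩ G s)) c
    rw [hsplit, p2]
    exact add_le_add p1 le_rfl
  have hcmp : (∫⁻ t in Set.Ioi (0:ℝ), ν (B ∩ G t)) ≤ ∫⁻ t in Set.Ioi (0:ℝ), ν (G t) :=
    lintegral_mono fun t => hmono _ _ inter_subset_right
  by_cases hfin : (∫⁻ t in Set.Ioi (0:ℝ), ν (B ∩ G t)) = ⊤
  · have htop : (∫⁻ t in Set.Ioi (0:ℝ), ν (G t)) = ⊤ := top_le_iff.mp (hfin ▸ hcmp)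
    rw [htop]
    simp
  · refine (ENNReal.add_le_add_iff_right hfin).mp ?_
    calc (∫⁻ t in Set.Ioi (0:ℝ),
          ν {x | ENNReal.ofReal t < f x + B.indicator (fun _ => ENNReal.ofReal c) x})
          + (∫⁻ t in Set.Ioi (0:ℝ), ν (B ∩ G t))
        ≤ (∫⁻ t in Set.Ioi (0:ℝ), ν (G t)) + (∫⁻ t in Set.Ioi (0:ℝ), ν (B ∩ H t)) := main
      _ ≤ (∫⁻ t in Set.Ioi (0:ℝ), ν (G t))
          + (ENNReal.ofReal c * ν B + ∫⁻ t in Set.Ioi (0:ℝ), ν (B ∩ G t)) := add_le_add le_rfl hBH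
      _ = ((∫⁻ t in Set.Ioi (0:ℝ), ν (G t)) + ENNReal.ofReal c * ν B)
          + ∫⁻ t in Set.Ioi (0:ℝ), ν (B ∩ G t) := by rw [add_assoc]

private lemma choquet_key_sum (ν : Set X → ℝ≥0∞)
    (hmono : ∀ A B : Set X, A ⊆ B → ν A ≤ ν B)
    (hssub : ∀ A B : Set X, ν (A ∪ B) + ν (A ∩ B) ≤ ν A + ν B)
    (c : ℝ) (hc : 0 < c) (K : ℕ) (f : X → ℝ≥0∞) (B : ℕ → Set X) :
    (∫⁻ t in Set.Ioi (0:ℝ), ν {x | ENNReal.ofReal t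
        < f x + ∑ k ∈ Finset.range K, (B k).indicator (fun _ => ENNReal.ofReal c) x})
      ≤ (∫⁻ t in Set.Ioi (0:ℝ), ν {x | ENNReal.ofReal t < f x})
        + ∑ k ∈ Finset.range K, ENNReal.ofReal c * ν (B k) := by
  induction K with
  | zero => simp
  | succ K ih =>
    simp only [Finset.sum_range_succ, ← add_assoc]
    exact le_trans
      (choquet_key ν hmono hssub
        (fun y => f y + ∑ k ∈ Finset.range K, (B k).indicator (fun _ => ENNReal.ofReal c) y)
        (B K) c hc)
      (add_le_add ih le_rfl)

/-- dyadic approximation -/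

private noncomputable def chqApprox (g : X → ℝ≥0∞) (n : ℕ) (x : X) : ℝ≥0∞ :=
  ∑ k ∈ Finset.range (n * 2 ^ n),
    ({y | ENNReal.ofReal (((k : ℝ) + 1) * (1/2 : ℝ) ^ n) ≤ g y}).indicator
      (fun _ => ENNReal.ofReal ((1/2 : ℝ) ^ n)) x

private lemma gs_le (g : X → ℝ≥0∞) (e : ℝ) (x : X) (K : ℕ) :
    (∑ k ∈ Finset.range K,
        ({y | ENNReal.ofReal (((k : ℝ) + 1) * e) ≤ g y}).indicator
          (fun _ => ENNReal.ofReal e) x)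
      ≤ min (g x) ((K : ℝ≥0∞) * ENNReal.ofReal e) := by
  induction K with
  | zero => simp
  | succ K ih =>
    rw [Finset.sum_range_succ]
    by_cases hx : x ∈ {y | ENNReal.ofReal (((K : ℝ) + 1) * e) ≤ g y}
    · have hKe : ((K : ℝ≥0∞) + 1) * ENNReal.ofReal e ≤ g x := by
        have hx' : ENNReal.ofReal (((K : ℝ) + 1) * e) ≤ g x := hx
        calc ((K : ℝ≥0∞) + 1) * ENNReal.ofReal e
            = ENNReal.ofReal (((K : ℝ) + 1) * e) := by
              rw [ENNReal.ofReal_mul (by positivity),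
                ENNReal.ofReal_add (by positivity) zero_le_one, ENNReal.ofReal_natCast,
                ENNReal.ofReal_one]
          _ ≤ g x := hx'
      rw [Set.indicator_of_mem hx]
      have hstep : (∑ k ∈ Finset.range K,
            ({y | ENNReal.ofReal (((k : ℝ) + 1) * e) ≤ g y}).indicator
              (fun _ => ENNReal.ofReal e) x) + ENNReal.ofReal e
          ≤ ((K : ℝ≥0∞) + 1) * ENNReal.ofReal e := by
        calc _ ≤ (K : ℝ≥0∞) * ENNReal.ofReal e + ENNReal.ofReal e :=
              add_le_add (le_trans ih (min_le_right _ _)) le_rfl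
          _ = ((K : ℝ≥0∞) + 1) * ENNReal.ofReal e := by ring
      refine le_min (le_trans hstep hKe) ?_
      refine le_trans hstep (le_of_eq ?_)
      push_cast
      ring
    · rw [Set.indicator_of_notMem hx, add_zero]
      refine le_trans ih (min_le_min le_rfl (mul_le_mul_left ?_ _))
      exact_mod_cast Nat.le_succ K

private lemma gs_ge (g : X → ℝ≥0∞) (e : ℝ) (he : 0 ≤ e) (x : X) (K M : ℕ) (hMK : M ≤ K)
    (hM : ENNReal.ofReal ((M : ℝ) * e) ≤ g x) :
    (M : ℝ≥0∞) * ENNReal.ofReal e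
      ≤ ∑ k ∈ Finset.range K,
          ({y | ENNReal.ofReal (((k : ℝ) + 1) * e) ≤ g y}).indicator
            (fun _ => ENNReal.ofReal e) x := by
  have hmem : ∀ k ∈ Finset.range M,
      ({y | ENNReal.ofReal (((k : ℝ) + 1) * e) ≤ g y}).indicator
        (fun _ => ENNReal.ofReal e) x = ENNReal.ofReal e := by
    intro k hk
    rw [Set.indicator_of_mem]
    show ENNReal.ofReal (((k : ℝ) + 1) * e) ≤ g x
    refine le_trans (ENNReal.ofReal_le_ofReal (mul_le_mul_of_nonneg_right ?_ he)) hM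
    have : (k : ℝ) + 1 ≤ (M : ℝ) := by exact_mod_cast Finset.mem_range.mp hk
    exact this
  calc (M : ℝ≥0∞) * ENNReal.ofReal e
      = ∑ _k ∈ Finset.range M, ENNReal.ofReal e := by
        rw [Finset.sum_const, Finset.card_range, nsmul_eq_mul]
    _ = ∑ k ∈ Finset.range M,
          ({y | ENNReal.ofReal (((k : ℝ) + 1) * e) ≤ g y}).indicator
            (fun _ => ENNReal.ofReal e) x := (Finset.sum_congr rfl hmem).symm
    _ ≤ _ := Finset.sum_le_sum_of_subset (Finset.range_subset_range.mpr hMK)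

private lemma sum_range_two_mul (a : ℕ → ℝ≥0∞) (K : ℕ) :
    ∑ j ∈ Finset.range (2 * K), a j = ∑ k ∈ Finset.range K, (a (2 * k) + a (2 * k + 1)) := by
  induction K with
  | zero => simp
  | succ K ih =>
    rw [show 2 * (K + 1) = (2 * K) + 1 + 1 by ring, Finset.sum_range_succ, Finset.sum_range_succ,
      ih, Finset.sum_range_succ, add_assoc]

private lemma chqApprox_mono (g : X → ℝ≥0∞) : Monotone fun n => chqApprox g n := by
  refine monotone_nat_of_le_succ fun n x => ?_
  have hpair : ∀ k : ℕ,
      ({y | ENNReal.ofReal (((k : ℝ) + 1) * (1/2 : ℝ) ^ n) ≤ g y}).indicator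
          (fun _ => ENNReal.ofReal ((1/2 : ℝ) ^ n)) x
        ≤ (({y | ENNReal.ofReal ((((2 * k : ℕ) : ℝ) + 1) * (1/2 : ℝ) ^ (n+1)) ≤ g y}).indicator
            (fun _ => ENNReal.ofReal ((1/2 : ℝ) ^ (n+1))) x
          + ({y | ENNReal.ofReal ((((2 * k + 1 : ℕ) : ℝ) + 1) * (1/2 : ℝ) ^ (n+1)) ≤ g y}).indicator
            (fun _ => ENNReal.ofReal ((1/2 : ℝ) ^ (n+1))) x) := by
    intro k
    by_cases hx : x ∈ {y | ENNReal.ofReal (((k : ℝ) + 1) * (1/2 : ℝ) ^ n) ≤ g y}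
    · have hx' : ENNReal.ofReal (((k : ℝ) + 1) * (1/2 : ℝ) ^ n) ≤ g x := hx
      have h1 : x ∈ {y | ENNReal.ofReal ((((2 * k : ℕ) : ℝ) + 1) * (1/2 : ℝ) ^ (n+1)) ≤ g y} := by
        show ENNReal.ofReal ((((2 * k : ℕ) : ℝ) + 1) * (1/2 : ℝ) ^ (n+1)) ≤ g x
        refine le_trans (ENNReal.ofReal_le_ofReal ?_) hx'
        push_cast
        rw [pow_succ]
        nlinarith [pow_pos (by norm_num : (0:ℝ) < 1/2) n]
      have h2 : x ∈ {y | ENNReal.ofReal ((((2 * k + 1 : ℕ) : ℝ) + 1) * (1/2 : ℝ) ^ (n+1)) ≤ g y} := by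
        show ENNReal.ofReal ((((2 * k + 1 : ℕ) : ℝ) + 1) * (1/2 : ℝ) ^ (n+1)) ≤ g x
        refine le_trans (ENNReal.ofReal_le_ofReal (le_of_eq ?_)) hx'
        push_cast
        rw [pow_succ]
        ring
      rw [Set.indicator_of_mem hx, Set.indicator_of_mem h1, Set.indicator_of_mem h2,
        ← ENNReal.ofReal_add (by positivity) (by positivity)]
      refine ENNReal.ofReal_le_ofReal (le_of_eq ?_)
      rw [pow_succ]
      ring
    · rw [Set.indicator_of_notMem hx]
      exact zero_le
  calc chqApprox g n x
      ≤ ∑ k ∈ Finset.range (n * 2 ^ n),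
          (({y | ENNReal.ofReal ((((2 * k : ℕ) : ℝ) + 1) * (1/2 : ℝ) ^ (n+1)) ≤ g y}).indicator
              (fun _ => ENNReal.ofReal ((1/2 : ℝ) ^ (n+1))) x
            + ({y | ENNReal.ofReal ((((2 * k + 1 : ℕ) : ℝ) + 1) * (1/2 : ℝ) ^ (n+1)) ≤ g y}).indicator
              (fun _ => ENNReal.ofReal ((1/2 : ℝ) ^ (n+1))) x) :=
        Finset.sum_le_sum fun k _ => hpair k
    _ = ∑ j ∈ Finset.range (2 * (n * 2 ^ n)),
          ({y | ENNReal.ofReal (((j : ℝ) + 1) * (1/2 : ℝ) ^ (n+1)) ≤ g y}).indicator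
            (fun _ => ENNReal.ofReal ((1/2 : ℝ) ^ (n+1))) x :=
        (sum_range_two_mul (fun j =>
          ({y | ENNReal.ofReal (((j : ℝ) + 1) * (1/2 : ℝ) ^ (n+1)) ≤ g y}).indicator
            (fun _ => ENNReal.ofReal ((1/2 : ℝ) ^ (n+1))) x) (n * 2 ^ n)).symm
    _ ≤ chqApprox g (n+1) x := by
        refine Finset.sum_le_sum_of_subset (Finset.range_subset_range.mpr ?_)
        ring_nf
        nlinarith [Nat.one_le_two_pow (n := n)]
  -- end calc

private lemma chqApprox_sup (g : X → ℝ≥0∞) (x : X) : (⨆ n, chqApprox g n x) = g x := by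
  refine le_antisymm (iSup_le fun n => le_trans (gs_le g _ x _) (min_le_left _ _)) ?_
  refine le_of_forall_lt fun b hb => ?_
  obtain ⟨r, hr0, hbr, hrg⟩ := ENNReal.lt_iff_exists_real_btwn.mp hb
  have hbtop : b ≠ ⊤ := hbr.ne_top
  have hbtr : b.toReal < r := (ENNReal.lt_ofReal_iff_toReal_lt hbtop).mp hbr
  obtain ⟨n₂, hn₂⟩ := exists_pow_lt_of_lt_one (by linarith : (0:ℝ) < r - b.toReal)
    (by norm_num : (1/2 : ℝ) < 1)
  set n := max n₂ ⌈r⌉₊ with hn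
  set e := (1/2 : ℝ) ^ n with he_def
  have he : 0 < e := by positivity
  have he2 : e ≤ (1/2 : ℝ) ^ n₂ :=
    pow_le_pow_of_le_one (by norm_num) (by norm_num) (le_max_left _ _)
  have h2e : (2:ℝ) ^ n * e = 1 := by
    rw [he_def, ← mul_pow]
    norm_num
  set M := ⌊r * 2 ^ n⌋₊ with hM
  have hrn : r ≤ (n : ℝ) := le_trans (Nat.le_ceil r) (by exact_mod_cast le_max_right n₂ ⌈r⌉₊)
  have hMK : M ≤ n * 2 ^ n := by
    have h1 : r * 2 ^ n ≤ ((n * 2 ^ n : ℕ) : ℝ) := by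
      push_cast
      exact mul_le_mul_of_nonneg_right hrn (by positivity)
    have := Nat.floor_le_floor h1
    rwa [Nat.floor_natCast] at this
  have hMr : (M : ℝ) * e ≤ r := by
    have h1 : (M : ℝ) ≤ r * 2 ^ n := Nat.floor_le (by positivity)
    calc (M : ℝ) * e ≤ (r * 2 ^ n) * e := mul_le_mul_of_nonneg_right h1 he.le
      _ = r * ((2:ℝ) ^ n * e) := by ring
      _ = r := by rw [h2e, mul_one]
  have hMe : ENNReal.ofReal ((M : ℝ) * e) ≤ g x :=
    le_trans (ENNReal.ofReal_le_ofReal hMr) hrg.le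
  have hlow := gs_ge g e he.le x (n * 2 ^ n) M hMK hMe
  rw [lt_iSup_iff]
  refine ⟨n, lt_of_lt_of_le ?_ hlow⟩
  have h1 : b.toReal < (M : ℝ) * e := by
    have hfl : r * 2 ^ n < (M : ℝ) + 1 := Nat.lt_floor_add_one _
    have : r < ((M : ℝ) + 1) * e := by
      calc r = (r * 2 ^ n) * e := by rw [mul_assoc, h2e, mul_one]
        _ < ((M : ℝ) + 1) * e := mul_lt_mul_of_pos_right hfl he
    nlinarith
  have hMpos : 0 < (M : ℝ) * e := lt_of_le_of_lt ENNReal.toReal_nonneg h1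
  calc b = ENNReal.ofReal b.toReal := (ENNReal.ofReal_toReal hbtop).symm
    _ < ENNReal.ofReal ((M : ℝ) * e) := (ENNReal.ofReal_lt_ofReal_iff hMpos).mpr h1
    _ = (M : ℝ≥0∞) * ENNReal.ofReal e := by
        rw [ENNReal.ofReal_mul (by positivity)]
        simp

private lemma gs_integral_le (ν : Set X → ℝ≥0∞)
    (hmono : ∀ A B : Set X, A ⊆ B → ν A ≤ ν B)
    (g : X → ℝ≥0∞) (e : ℝ) (he : 0 < e) (K : ℕ) :
    ∑ k ∈ Finset.range K, ENNReal.ofReal e * ν {y | ENNReal.ofReal (((k : ℝ) + 1) * e) ≤ g y}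
      ≤ ∫⁻ t in Set.Ioc (0:ℝ) ((K : ℝ) * e), ν {x | ENNReal.ofReal t < g x} := by
  induction K with
  | zero => simp
  | succ K ih =>
    rw [Finset.sum_range_succ]
    have hsplit : Set.Ioc (0:ℝ) (((K:ℕ)+1 : ℕ) * e)
        = Set.Ioc 0 ((K : ℝ) * e) ∪ Set.Ioc ((K : ℝ) * e) (((K : ℝ) + 1) * e) := by
      rw [Set.Ioc_union_Ioc_eq_Ioc (by positivity) (by nlinarith)]
      push_cast
      ring_nf
    rw [hsplit, lintegral_union measurableSet_Ioc (Set.Ioc_disjoint_Ioc_of_le le_rfl)]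
    refine add_le_add ih ?_
    rw [(setLIntegral_congr Ioo_ae_eq_Ioc).symm]
    calc ENNReal.ofReal e * ν {y | ENNReal.ofReal (((K : ℝ) + 1) * e) ≤ g y}
        = ν {y | ENNReal.ofReal (((K : ℝ) + 1) * e) ≤ g y}
            * volume (Set.Ioo ((K : ℝ) * e) (((K : ℝ) + 1) * e)) := by
          rw [Real.volume_Ioo, mul_comm]
          congr 2
          ring
      _ = ∫⁻ _ in Set.Ioo ((K : ℝ) * e) (((K : ℝ) + 1) * e),
            ν {y | ENNReal.ofReal (((K : ℝ) + 1) * e) ≤ g y} := (setLIntegral_const _ _).symm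
      _ ≤ ∫⁻ t in Set.Ioo ((K : ℝ) * e) (((K : ℝ) + 1) * e), ν {x | ENNReal.ofReal t < g x} := by
          refine setLIntegral_mono (choquet_anti' ν hmono g).measurable fun t ht => ?_
          refine hmono _ _ fun x hx => ?_
          have hx' : ENNReal.ofReal (((K : ℝ) + 1) * e) ≤ g x := hx
          refine lt_of_lt_of_le ?_ hx'
          exact (ENNReal.ofReal_lt_ofReal_iff (by positivity)).mpr ht.2

end ChoquetAux

/-- If a monotone set function is strongly subadditive and continuous from below, then
its Choquet integral is subadditive. -/
theorem choquet_subadditive {X : Type*} (ν : Set X → ℝ≥0∞) (hν0 : ν ∅ = 0)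
    (hmono : ∀ A B : Set X, A ⊆ B → ν A ≤ ν B)
    (hssub : ∀ A B : Set X, ν (A ∪ B) + ν (A ∩ B) ≤ ν A + ν B)
    (hcont : ∀ A : ℕ → Set X, Monotone A →
      Tendsto (fun n => ν (A n)) atTop (𝓝 (ν (⋃ n, A n))))
    (f g : X → ℝ≥0∞) :
    choquetInt ν Set.univ (fun x => f x + g x) ≤
      choquetInt ν Set.univ f + choquetInt ν Set.univ g := by
  simp only [choquetInt, Set.sep_univ]
  -- pointwise sup identity
  have hsupset : ∀ t : ℝ, ν {x | ENNReal.ofReal t < f x + g x}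
      = ⨆ n, ν {x | ENNReal.ofReal t < f x + chqApprox g n x} := by
    intro t
    have hA : Monotone fun n => {x | ENNReal.ofReal t < f x + chqApprox g n x} := by
      intro a b hab x hx
      exact lt_of_lt_of_le hx (add_le_add le_rfl (chqApprox_mono g hab x))
    have hU : (⋃ n, {x | ENNReal.ofReal t < f x + chqApprox g n x})
        = {x | ENNReal.ofReal t < f x + g x} := by
      ext x
      simp only [Set.mem_iUnion, Set.mem_setOf_eq]
      rw [← chqApprox_sup g x, ENNReal.add_iSup, lt_iSup_iff]
    have h1 := hcont _ hA
    rw [hU] at h1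
    have h2 : Monotone fun n => ν {x | ENNReal.ofReal t < f x + chqApprox g n x} :=
      fun a b hab => hmono _ _ (hA hab)
    exact tendsto_nhds_unique h1 (tendsto_atTop_iSup h2)
  have hmct : (∫⁻ t in Set.Ioi (0:ℝ), ν {x | ENNReal.ofReal t < f x + g x})
      = ⨆ n, ∫⁻ t in Set.Ioi (0:ℝ), ν {x | ENNReal.ofReal t < f x + chqApprox g n x} := by
    rw [show (fun t : ℝ => ν {x | ENNReal.ofReal t < f x + g x})
        = fun t : ℝ => ⨆ n, ν {x | ENNReal.ofReal t < f x + chqApprox g n x} from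
      funext hsupset]
    exact lintegral_iSup
      (fun n => (choquet_anti' ν hmono fun x => f x + chqApprox g n x).measurable)
      (fun a b hab t => hmono _ _ fun x hx =>
        lt_of_lt_of_le hx (add_le_add le_rfl (chqApprox_mono g hab x)))
  rw [hmct]
  refine iSup_le fun n => ?_
  have hkey := choquet_key_sum ν hmono hssub ((1/2:ℝ)^n) (by positivity) (n * 2 ^ n) f
    (fun k => {y | ENNReal.ofReal (((k : ℝ) + 1) * (1/2 : ℝ) ^ n) ≤ g y})
  have happ : (∫⁻ t in Set.Ioi (0:ℝ), ν {x | ENNReal.ofReal t < f x + chqApprox g n x})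
      ≤ (∫⁻ t in Set.Ioi (0:ℝ), ν {x | ENNReal.ofReal t < f x})
        + ∑ k ∈ Finset.range (n * 2 ^ n), ENNReal.ofReal ((1/2:ℝ)^n)
            * ν {y | ENNReal.ofReal (((k : ℝ) + 1) * (1/2 : ℝ) ^ n) ≤ g y} := by
    simpa only [chqApprox] using hkey
  refine le_trans happ (add_le_add le_rfl ?_)
  refine le_trans (gs_integral_le ν hmono g _ (by positivity) (n * 2 ^ n)) ?_
  exact lintegral_mono_set Set.Ioc_subset_Ioi_self
end
end
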